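/- Let n ≥ 2 and m ≥ 2 and let μ_{n,m} be the two-stage sampling law associated with ν. Then for any indices with j ≠ t: ∫ k(X_{ij}, X_{it}) dμ_{n,m}(X) = ∫ ⟨P|k|P⟩ dν(P), and for any indices with i ≠ s: ∫ k(X_{ij}, X_{st}) dμ_{n,m}(X) = ⟨join(ν)|k|join(ν)⟩. -/

import Mathlib

open MeasureTheory ProbabilityTheory

noncomputable section

/-- The σ-algebra on the space of probability measures induced from the σ-algebra on
`Measure Y` generated by the evaluation maps. -/
instance {Y : Type*} [MeasurableSpace Y] : MeasurableSpace (ProbabilityMeasure Y) :=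
  MeasurableSpace.comap (fun P => (P : Measure Y)) inferInstance

/-- The kernel bilinear form `⟨P|k|Q⟩ = ∫∫ k(x,y) dP(x) dQ(y)`. -/
def kerInner {Y : Type*} [MeasurableSpace Y] (k : Y → Y → ℝ) (P Q : Measure Y) : ℝ :=
  ∫ x, ∫ y, k x y ∂Q ∂P

/-- `join(ν)`: the probability measure `A ↦ ∫ P(A) dν(P)`. -/
def pmJoin {Y : Type*} [MeasurableSpace Y] (ν : Measure (ProbabilityMeasure Y)) : Measure Y :=
  ν.bind (fun P => (P : Measure Y))

/-- The two-stage sampling law `μ_{n,m}` on `Fin n → Fin m → Y`: sample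
`P₁, …, Pₙ` i.i.d. from `ν`, then conditionally on `Pᵢ` sample `X_{i1}, …, X_{im}`
i.i.d. from `Pᵢ`, independently across `i`. -/
def twoStage {Y : Type*} [MeasurableSpace Y] (ν : Measure (ProbabilityMeasure Y))
    (n m : ℕ) : Measure (Fin n → Fin m → Y) :=
  (Measure.pi fun _ : Fin n => ν).bind
    (fun Ps => Measure.pi fun i : Fin n => Measure.pi fun _ : Fin m => (Ps i : Measure Y))

section Aux

open Set

variable {α β : Type*} [MeasurableSpace α] [MeasurableSpace β]

lemma aux_abs_integral_le (μ : Measure α) [IsProbabilityMeasure μ] {f : α → ℝ} {C : ℝ}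
    (h : ∀ x, |f x| ≤ C) : |∫ x, f x ∂μ| ≤ C := by
  have := norm_integral_le_of_norm_le_const (μ := μ) (f := f) (C := C)
    (Filter.Eventually.of_forall fun x => by simpa using h x)
  simpa using this

lemma aux_integrable_of_bdd (μ : Measure α) [IsFiniteMeasure μ] {f : α → ℝ}
    (hf : AEStronglyMeasurable f μ) {C : ℝ} (h : ∀ x, |f x| ≤ C) : Integrable f μ :=
  Integrable.mono' (integrable_const C) hf (Filter.Eventually.of_forall fun x => by
    simpa [Real.norm_eq_abs] using h x)

lemma aux_measurable_pi {ι : Type*} [Fintype ι] (κ : ι → α → Measure β)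
    (hκ : ∀ i, Measurable (κ i)) (hp : ∀ i a, IsProbabilityMeasure (κ i a)) :
    Measurable fun a => Measure.pi (fun i => κ i a) := by
  haveI := hp
  apply Measure.measurable_of_measurable_coe
  have h_eq : (inferInstance : MeasurableSpace (∀ _ : ι, β))
      = MeasurableSpace.generateFrom
        (pi univ '' pi univ fun _ : ι => { s : Set β | MeasurableSet s }) :=
    generateFrom_pi.symm
  intro s hs
  refine MeasurableSpace.induction_on_inter
    (C := fun s _ => Measurable fun a => Measure.pi (fun i => κ i a) s)
    h_eq isPiSystem_pi ?_ ?_ ?_ ?_ _ hs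
  · simp
  · rintro _ ⟨t, ht, rfl⟩
    simp only [Measure.pi_pi]
    exact Finset.measurable_prod _ fun i _ =>
      (Measure.measurable_coe (ht i (mem_univ i))).comp (hκ i)
  · intro t ht h
    have : ∀ a, Measure.pi (fun i => κ i a) tᶜ = 1 - Measure.pi (fun i => κ i a) t := by
      intro a
      rw [measure_compl ht (measure_ne_top _ _), measure_univ]
    simp_rw [this]
    exact measurable_const.sub h
  · intro f hd hm hmeas
    simp_rw [measure_iUnion hd hm]
    exact Measurable.ennreal_tsum hmeas

lemma aux_pi_map_eval {ι : Type*} [Fintype ι] [DecidableEq ι] (μ : ι → Measure β)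
    [∀ i, IsProbabilityMeasure (μ i)] (i : ι) :
    (Measure.pi μ).map (fun X => X i) = μ i := by
  ext s hs
  rw [Measure.map_apply (measurable_pi_apply i) hs]
  have hpre : (fun X : ∀ _ : ι, β => X i) ⁻¹' s
      = Set.pi univ (fun l => if l = i then s else univ) := by
    ext X
    simp only [mem_preimage, mem_pi, mem_univ, true_implies]
    constructor
    · intro hX l
      by_cases hl : l = i
      · subst hl; simpa using hX
      · simp [hl]
    · intro hX
      have := hX i
      simpa using this
  rw [hpre, Measure.pi_pi]
  have : ∀ l, μ l (if l = i then s else univ) = if l = i then μ i s else 1 := by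
    intro l
    by_cases hl : l = i
    · subst hl; simp
    · simp [hl]
  simp_rw [this, Finset.prod_ite_eq', Finset.mem_univ, if_true]

lemma aux_pi_map_pair {ι : Type*} [Fintype ι] [DecidableEq ι] (μ : ι → Measure β)
    [∀ i, IsProbabilityMeasure (μ i)] {j t : ι} (h : j ≠ t) :
    (Measure.pi μ).map (fun X => (X j, X t)) = (μ j).prod (μ t) := by
  refine (Measure.prod_eq fun s s' hs hs' => ?_).symm
  rw [Measure.map_apply ((measurable_pi_apply j).prodMk (measurable_pi_apply t)) (hs.prod hs')]
  have hpre : (fun X : ∀ _ : ι, β => (X j, X t)) ⁻¹' (s ×ˢ s')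
      = Set.pi univ (fun l => if l = j then s else if l = t then s' else univ) := by
    ext X
    simp only [mem_preimage, mem_prod, mem_pi, mem_univ, true_implies]
    constructor
    · rintro ⟨h1, h2⟩ l
      by_cases hl : l = j
      · subst hl; simpa using h1
      · by_cases hl' : l = t
        · subst hl'; simp [hl, h2]
        · simp [hl, hl']
    · intro hX
      have h1 := hX j
      have h2 := hX t
      rw [if_pos rfl] at h1
      rw [if_neg (Ne.symm h), if_pos rfl] at h2
      exact ⟨h1, h2⟩
  rw [hpre, Measure.pi_pi]
  have key : ∀ l, μ l (if l = j then s else if l = t then s' else univ)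
      = (if l = j then μ j s else 1) * (if l = t then μ t s' else 1) := by
    intro l
    by_cases hl : l = j
    · subst hl; simp [if_neg h]
    · by_cases hl' : l = t
      · subst hl'; simp [hl]
      · simp [hl, hl']
  simp_rw [key, Finset.prod_mul_distrib, Finset.prod_ite_eq', Finset.mem_univ, if_true]

lemma aux_isProb_bind (μ : Measure α) [IsProbabilityMeasure μ] (m : α → Measure β)
    (hm : Measurable m) (hp : ∀ a, IsProbabilityMeasure (m a)) :
    IsProbabilityMeasure (μ.bind m) := by
  constructor
  rw [Measure.bind_apply MeasurableSet.univ hm.aemeasurable]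
  simp [fun a => (hp a).measure_univ]

lemma aux_integral_bind (μ : Measure α) [IsProbabilityMeasure μ] (m : α → Measure β)
    (hm : Measurable m) (hp : ∀ a, IsProbabilityMeasure (m a)) {f : β → ℝ}
    (hf : StronglyMeasurable f) {C : ℝ} (hC : ∀ x, |f x| ≤ C) :
    ∫ x, f x ∂(μ.bind m) = ∫ a, ∫ x, f x ∂(m a) ∂μ := by
  let κ : Kernel α β := ⟨m, hm⟩
  haveI : IsMarkovKernel κ := ⟨hp⟩
  have hbind : μ.bind m = (μ ⊗ₘ κ).map Prod.snd := by
    ext s hs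
    rw [Measure.map_apply measurable_snd hs,
      Measure.compProd_apply (measurable_snd hs),
      Measure.bind_apply hs hm.aemeasurable]
    rfl
  haveI : IsProbabilityMeasure (μ ⊗ₘ κ) :=
    ⟨by rw [Measure.compProd_apply_univ]; exact measure_univ⟩
  rw [hbind, integral_map measurable_snd.aemeasurable hf.aestronglyMeasurable,
    Measure.integral_compProd (f := fun z : α × β => f z.2)
      (aux_integrable_of_bdd _ ((hf.comp_measurable measurable_snd).aestronglyMeasurable)
        (fun z => hC z.2))]
  rfl

end Aux

/-- Expectations of single kernel evaluations under the two-stage sampling law: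
within a cluster (`j ≠ t`) one obtains `∫ ⟨P|k|P⟩ dν(P)`; across clusters (`i ≠ s`)
one obtains `⟨join(ν)|k|join(ν)⟩`. -/
theorem twoStage_kernel_moments
    {Y : Type*} [MeasurableSpace Y]
    (k : Y → Y → ℝ)
    (hk_meas : Measurable fun p : Y × Y => k p.1 p.2)
    (hk_symm : ∀ x y, k x y = k y x)
    (hk_bdd : ∃ K, ∀ x y, |k x y| ≤ K)
    (hk_psd : ∀ (N : ℕ) (x : Fin N → Y) (a : Fin N → ℝ),
      0 ≤ ∑ i, ∑ j, a i * k (x i) (x j) * a j)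
    (ν : Measure (ProbabilityMeasure Y)) [IsProbabilityMeasure ν]
    (n m : ℕ) (hn : 2 ≤ n) (hm : 2 ≤ m) :
    (∀ (i : Fin n) (j t : Fin m), j ≠ t →
        ∫ X, k (X i j) (X i t) ∂(twoStage ν n m)
          = ∫ P, kerInner k (P : Measure Y) (P : Measure Y) ∂ν)
    ∧ (∀ (i s : Fin n) (j t : Fin m), i ≠ s →
        ∫ X, k (X i j) (X s t) ∂(twoStage ν n m)
          = kerInner k (pmJoin ν) (pmJoin ν)) := by
  classical
  obtain ⟨K, hK⟩ := hk_bdd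
  set C := max K 0 with hCdef
  have hC : ∀ x y, |k x y| ≤ C := fun x y => (hK x y).trans (le_max_left _ _)
  have hcoe : Measurable (fun P : ProbabilityMeasure Y => (P : Measure Y)) :=
    measurable_iff_comap_le.2 le_rfl
  have hkSM : StronglyMeasurable fun p : Y × Y => k p.1 p.2 := hk_meas.stronglyMeasurable
  -- measurability of `h (x, Q) = ∫ y, k x y ∂Q`
  let κh : Kernel (Y × ProbabilityMeasure Y) Y := ⟨fun p => (p.2 : Measure Y),
    hcoe.comp measurable_snd⟩
  haveI : IsMarkovKernel κh :=
    ⟨fun p => show IsProbabilityMeasure ((p.2 : Measure Y)) from inferInstance⟩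
  have hh : StronglyMeasurable fun p : Y × ProbabilityMeasure Y =>
      ∫ y, k p.1 y ∂(p.2 : Measure Y) := by
    have := StronglyMeasurable.integral_kernel_prod_right (κ := κh)
      (f := fun p y => k p.1 y)
      (hk_meas.comp ((measurable_fst.comp measurable_fst).prodMk
        measurable_snd)).stronglyMeasurable
    exact this
  have hhbdd : ∀ p : Y × ProbabilityMeasure Y, |∫ y, k p.1 y ∂(p.2 : Measure Y)| ≤ C :=
    fun p => aux_abs_integral_le _ (fun y => hC _ _)
  -- measurability of `g (P, Q) = kerInner k P Q`
  let κg : Kernel (ProbabilityMeasure Y × ProbabilityMeasure Y) Y := ⟨fun p => (p.1 : Measure Y),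
    hcoe.comp measurable_fst⟩
  haveI : IsMarkovKernel κg :=
    ⟨fun p => show IsProbabilityMeasure ((p.1 : Measure Y)) from inferInstance⟩
  have hg : StronglyMeasurable fun p : ProbabilityMeasure Y × ProbabilityMeasure Y =>
      kerInner k (p.1 : Measure Y) (p.2 : Measure Y) := by
    have := StronglyMeasurable.integral_kernel_prod_right (κ := κg)
      (f := fun p x => ∫ y, k x y ∂(p.2 : Measure Y))
      (hh.comp_measurable (measurable_snd.prodMk measurable_fst.snd))
    exact this
  have hgbdd : ∀ p : ProbabilityMeasure Y × ProbabilityMeasure Y,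
      |kerInner k (p.1 : Measure Y) (p.2 : Measure Y)| ≤ C :=
    fun p => aux_abs_integral_le _ (fun x => hhbdd (x, p.2))
  -- measurability of `F x = ∫ Q, ∫ y, k x y ∂Q ∂ν`
  have hF : StronglyMeasurable fun x : Y =>
      ∫ Q : ProbabilityMeasure Y, (∫ y, k x y ∂(Q : Measure Y)) ∂ν := by
    have := StronglyMeasurable.integral_kernel_prod_right
      (κ := Kernel.const Y ν)
      (f := fun (x : Y) (Q : ProbabilityMeasure Y) => ∫ y, k x y ∂(Q : Measure Y)) hh
    exact this
  -- the two-stage conditional law is a measurable family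
  have hmfun : Measurable fun Ps : Fin n → ProbabilityMeasure Y =>
      Measure.pi fun i : Fin n => Measure.pi fun _ : Fin m => (Ps i : Measure Y) := by
    refine aux_measurable_pi _ (fun i => ?_) (fun i a => inferInstance)
    exact aux_measurable_pi _ (fun _ => hcoe.comp (measurable_pi_apply i))
      (fun _ a => inferInstance)
  -- within-cluster pair distribution
  have key1 : ∀ (P : ProbabilityMeasure Y) {j t : Fin m}, j ≠ t →
      ∫ x : Fin m → Y, k (x j) (x t) ∂(Measure.pi fun _ : Fin m => (P : Measure Y))
        = kerInner k (P : Measure Y) (P : Measure Y) := by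
    intro P j t hjt
    have h1 := integral_map (μ := Measure.pi fun _ : Fin m => (P : Measure Y))
      (φ := fun x : Fin m → Y => (x j, x t))
      ((measurable_pi_apply j).prodMk (measurable_pi_apply t)).aemeasurable
      (f := fun p : Y × Y => k p.1 p.2) hkSM.aestronglyMeasurable
    rw [← h1, aux_pi_map_pair _ hjt]
    exact integral_prod _ (aux_integrable_of_bdd _ hkSM.aestronglyMeasurable (fun p => hC _ _))
  -- within-cluster inner integral
  have inner1 : ∀ (i : Fin n) {j t : Fin m}, j ≠ t → ∀ Ps : Fin n → ProbabilityMeasure Y,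
      ∫ X, k (X i j) (X i t)
          ∂(Measure.pi fun i' : Fin n => Measure.pi fun _ : Fin m => (Ps i' : Measure Y))
        = kerInner k (Ps i : Measure Y) (Ps i : Measure Y) := by
    intro i j t hjt Ps
    have hm1 : Measurable fun x : Fin m → Y => (x j, x t) :=
      (measurable_pi_apply j).prodMk (measurable_pi_apply t)
    have hf1 : Measurable fun x : Fin m → Y => k (x j) (x t) := hk_meas.comp hm1
    have h1 := integral_map
      (μ := Measure.pi fun i' : Fin n => Measure.pi fun _ : Fin m => (Ps i' : Measure Y))
      (φ := fun X => X i) (measurable_pi_apply i).aemeasurable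
      (f := fun x : Fin m → Y => k (x j) (x t))
      hf1.stronglyMeasurable.aestronglyMeasurable
    rw [← h1, aux_pi_map_eval, key1 _ hjt]
  -- cross-cluster inner integral
  have inner2 : ∀ (i s : Fin n) (j t : Fin m), i ≠ s → ∀ Ps : Fin n → ProbabilityMeasure Y,
      ∫ X, k (X i j) (X s t)
          ∂(Measure.pi fun i' : Fin n => Measure.pi fun _ : Fin m => (Ps i' : Measure Y))
        = kerInner k (Ps i : Measure Y) (Ps s : Measure Y) := by
    intro i s j t his Ps
    have hm2 : Measurable fun p : (Fin m → Y) × (Fin m → Y) => (p.1 j, p.2 t) :=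
      ((measurable_pi_apply j).comp measurable_fst).prodMk
        ((measurable_pi_apply t).comp measurable_snd)
    have hf2 : Measurable fun p : (Fin m → Y) × (Fin m → Y) => k (p.1 j) (p.2 t) :=
      hk_meas.comp hm2
    have h1 := integral_map
      (μ := Measure.pi fun i' : Fin n => Measure.pi fun _ : Fin m => (Ps i' : Measure Y))
      (φ := fun X => (X i, X s))
      ((measurable_pi_apply i).prodMk (measurable_pi_apply s)).aemeasurable
      (f := fun p : (Fin m → Y) × (Fin m → Y) => k (p.1 j) (p.2 t))
      hf2.stronglyMeasurable.aestronglyMeasurable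
    rw [← h1, aux_pi_map_pair _ his,
      integral_prod _ (aux_integrable_of_bdd _ hf2.stronglyMeasurable.aestronglyMeasurable
        (fun p => hC _ _))]
    have hinner : ∀ x : Fin m → Y,
        ∫ y : Fin m → Y, k (x j) (y t) ∂(Measure.pi fun _ : Fin m => (Ps s : Measure Y))
          = ∫ b, k (x j) b ∂(Ps s : Measure Y) := by
      intro x
      have h2 := integral_map (μ := Measure.pi fun _ : Fin m => (Ps s : Measure Y))
        (φ := fun y : Fin m → Y => y t) (measurable_pi_apply t).aemeasurable
        (f := fun b => k (x j) b)
        ((hk_meas.comp ((measurable_const (a := x j)).prodMk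
          measurable_id) : Measurable fun b : Y => k (x j) b)
          |>.stronglyMeasurable.aestronglyMeasurable)
      rw [← h2, aux_pi_map_eval]
    simp_rw [hinner]
    have hGs : StronglyMeasurable fun a : Y => ∫ b, k a b ∂(Ps s : Measure Y) :=
      hh.comp_measurable (measurable_id.prodMk measurable_const)
    have h3 := integral_map (μ := Measure.pi fun _ : Fin m => (Ps i : Measure Y))
      (φ := fun x : Fin m → Y => x j) (measurable_pi_apply j).aemeasurable
      (f := fun a => ∫ b, k a b ∂(Ps s : Measure Y)) hGs.aestronglyMeasurable
    rw [← h3, aux_pi_map_eval]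
    rfl
  -- the join is a probability measure
  haveI hjp : IsProbabilityMeasure (pmJoin ν) :=
    aux_isProb_bind ν _ hcoe (fun P => inferInstance)
  -- identification of the join bilinear form
  have joinEq : kerInner k (pmJoin ν) (pmJoin ν)
      = ∫ P : ProbabilityMeasure Y,
          ∫ Q : ProbabilityMeasure Y, kerInner k (P : Measure Y) (Q : Measure Y) ∂ν ∂ν := by
    have hA : ∀ x : Y, ∫ y, k x y ∂(pmJoin ν)
        = ∫ Q : ProbabilityMeasure Y, (∫ y, k x y ∂(Q : Measure Y)) ∂ν := fun x =>
      aux_integral_bind ν _ hcoe (fun P => inferInstance)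
        (hk_meas.comp (measurable_const.prodMk measurable_id)).stronglyMeasurable
        (fun y => hC x y)
    have step1 : kerInner k (pmJoin ν) (pmJoin ν)
        = ∫ x, (∫ Q : ProbabilityMeasure Y, (∫ y, k x y ∂(Q : Measure Y)) ∂ν) ∂(pmJoin ν) := by
      unfold kerInner
      exact integral_congr_ae (Filter.Eventually.of_forall fun x => hA x)
    rw [step1,
      show pmJoin ν = ν.bind (fun P : ProbabilityMeasure Y => (P : Measure Y)) from rfl,
      aux_integral_bind ν _ hcoe (fun P => inferInstance) hF
        (fun x => aux_abs_integral_le ν (fun Q => hhbdd (x, Q)))]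
    refine integral_congr_ae (Filter.Eventually.of_forall fun P => ?_)
    have hswap : ∫ x : Y, (∫ Q : ProbabilityMeasure Y, (∫ y, k x y ∂(Q : Measure Y)) ∂ν)
          ∂(P : Measure Y)
        = ∫ Q : ProbabilityMeasure Y,
            (∫ x, (∫ y, k x y ∂(Q : Measure Y)) ∂(P : Measure Y)) ∂ν :=
      integral_integral_swap
        (f := fun (x : Y) (Q : ProbabilityMeasure Y) => ∫ y, k x y ∂(Q : Measure Y))
        (aux_integrable_of_bdd ((P : Measure Y).prod ν) hh.aestronglyMeasurable hhbdd)
    exact hswap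
  constructor
  · intro i j t hjt
    have hmp : Measurable fun X : Fin n → Fin m → Y => (X i j, X i t) :=
      ((measurable_pi_apply j).comp (measurable_pi_apply i)).prodMk
        ((measurable_pi_apply t).comp (measurable_pi_apply i))
    have hfmeas : Measurable fun X : Fin n → Fin m → Y => k (X i j) (X i t) :=
      hk_meas.comp hmp
    rw [twoStage, aux_integral_bind _ _ hmfun (fun _ => inferInstance)
      hfmeas.stronglyMeasurable (fun X => hC _ _)]
    simp_rw [inner1 i hjt]
    have hG : StronglyMeasurable fun P : ProbabilityMeasure Y =>
        kerInner k (P : Measure Y) (P : Measure Y) :=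
      hg.comp_measurable (measurable_id.prodMk measurable_id)
    have h2 := integral_map (μ := Measure.pi fun _ : Fin n => ν)
      (φ := fun Ps : Fin n → ProbabilityMeasure Y => Ps i)
      (measurable_pi_apply i).aemeasurable hG.aestronglyMeasurable
    rw [← h2, aux_pi_map_eval]
  · intro i s j t his
    have hmp : Measurable fun X : Fin n → Fin m → Y => (X i j, X s t) :=
      ((measurable_pi_apply j).comp (measurable_pi_apply i)).prodMk
        ((measurable_pi_apply t).comp (measurable_pi_apply s))
    have hfmeas : Measurable fun X : Fin n → Fin m → Y => k (X i j) (X s t) :=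
      hk_meas.comp hmp
    rw [twoStage, aux_integral_bind _ _ hmfun (fun _ => inferInstance)
      hfmeas.stronglyMeasurable (fun X => hC _ _)]
    simp_rw [inner2 i s j t his]
    have h3 := integral_map (μ := Measure.pi fun _ : Fin n => ν)
      (φ := fun Ps : Fin n → ProbabilityMeasure Y => (Ps i, Ps s))
      ((measurable_pi_apply i).prodMk (measurable_pi_apply s)).aemeasurable
      (f := fun p : ProbabilityMeasure Y × ProbabilityMeasure Y =>
        kerInner k (p.1 : Measure Y) (p.2 : Measure Y)) hg.aestronglyMeasurable
    rw [← h3, aux_pi_map_pair _ his,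
      integral_prod _ (aux_integrable_of_bdd _ hg.aestronglyMeasurable hgbdd), ← joinEq]
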